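/- Let Y be a set of type 2 whose spine contains the point x, and let P be a plane in ℝ³. Then D_{x,r}(Y,P) > 1/3 for every r > 0. -/

import Mathlib

noncomputable section

open Metric Set

/-- Euclidean 3-space. -/
abbrev E3 := EuclideanSpace ℝ (Fin 3)

/-- The normalized local Hausdorff distance `D_{x,r}(E,F)`. -/
noncomputable def relDist (x : E3) (r : ℝ) (E F : Set E3) : ℝ :=
  r⁻¹ * max (sSup ((fun z => Metric.infDist z F) '' (E ∩ ball x r)))
            (sSup ((fun z => Metric.infDist z E) '' (F ∩ ball x r)))

/-- `R` is the composition of a translation and a rotation of `ℝ³`. -/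
def IsRigidMotion (R : E3 → E3) : Prop :=
  ∃ (f : E3 ≃ₗᵢ[ℝ] E3) (v : E3),
    LinearMap.det (f.toLinearEquiv.toLinearMap) = 1 ∧ ∀ x, R x = f x + v

/-- Sets of type 1 : planes (2-dimensional affine subspaces of `ℝ³`). -/
def IsType1 (Z : Set E3) : Prop :=
  ∃ P : AffineSubspace ℝ E3, Module.finrank ℝ P.direction = 2 ∧ Z = (P : Set E3)

/-- The standard propeller `Prop × ℝ ⊆ ℝ³`. -/
def YBase : Set E3 :=
  {x | (0 ≤ x 0 ∧ x 1 = 0) ∨ (x 0 ≤ 0 ∧ x 1 = -Real.sqrt 3 * x 0) ∨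
       (x 0 ≤ 0 ∧ x 1 = Real.sqrt 3 * x 0)}

/-- The spine `{x₁ = x₂ = 0}` of the standard set of type 2. -/
def YSpineBase : Set E3 := {x | x 0 = 0 ∧ x 1 = 0}

/-- The three faces of the standard set of type 2. -/
def YFaceBase : Fin 3 → Set E3 :=
  ![{x | 0 ≤ x 0 ∧ x 1 = 0},
    {x | x 0 ≤ 0 ∧ x 1 = -Real.sqrt 3 * x 0},
    {x | x 0 ≤ 0 ∧ x 1 = Real.sqrt 3 * x 0}]

/-- Sets of type 2. -/
def IsType2 (Y : Set E3) : Prop := ∃ R, IsRigidMotion R ∧ Y = R '' YBase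

/-- `Y` is a set of type 2 with spine `L`. -/
def Type2Spine (Y L : Set E3) : Prop :=
  ∃ R, IsRigidMotion R ∧ Y = R '' YBase ∧ L = R '' YSpineBase

/-- The four vertices of the regular tetrahedron. -/
noncomputable def tA : Fin 4 → E3 :=
  ![(WithLp.equiv 2 (Fin 3 → ℝ)).symm ![1, 0, 0],
    (WithLp.equiv 2 (Fin 3 → ℝ)).symm ![-(1/3), 2 * Real.sqrt 2 / 3, 0],
    (WithLp.equiv 2 (Fin 3 → ℝ)).symm ![-(1/3), -(Real.sqrt 2 / 3), Real.sqrt 6 / 3],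
    (WithLp.equiv 2 (Fin 3 → ℝ)).symm ![-(1/3), -(Real.sqrt 2 / 3), -(Real.sqrt 6 / 3)]]

/-- The standard set `T₀` of type 3 : the cone over the six edges of the tetrahedron. -/
def TBase : Set E3 :=
  {x | ∃ t : ℝ, 0 ≤ t ∧ ∃ i j : Fin 4, i ≠ j ∧ ∃ z ∈ segment ℝ (tA i) (tA j), x = t • z}

/-- The spine of `T₀` : the four half lines `[0, Aⱼ)`. -/
def TSpineBase : Set E3 := {x | ∃ t : ℝ, 0 ≤ t ∧ ∃ j : Fin 4, x = t • tA j}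

/-- The face of `T₀` over the edge `[Aᵢ, Aⱼ]`. -/
def TFaceBase (i j : Fin 4) : Set E3 :=
  {x | ∃ t : ℝ, 0 ≤ t ∧ ∃ z ∈ segment ℝ (tA i) (tA j), x = t • z}

/-- Sets of type 3. -/
def IsType3 (T : Set E3) : Prop := ∃ R, IsRigidMotion R ∧ T = R '' TBase

/-- `T` is a set of type 3 centered at `c`. -/
def Type3Center (T : Set E3) (c : E3) : Prop :=
  ∃ R, IsRigidMotion R ∧ T = R '' TBase ∧ c = R 0

/-- `T` is a set of type 3 with spine `L`. -/
def Type3Spine (T L : Set E3) : Prop :=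
  ∃ R, IsRigidMotion R ∧ T = R '' TBase ∧ L = R '' TSpineBase

/-- `T` is a set of type 3 centered at `c` with spine `L`. -/
def Type3CenterSpine (T : Set E3) (c : E3) (L : Set E3) : Prop :=
  ∃ R, IsRigidMotion R ∧ T = R '' TBase ∧ c = R 0 ∧ L = R '' TSpineBase

/-- Minimal cones : sets of type 1, 2 or 3. -/
def MinimalCone (Z : Set E3) : Prop := IsType1 Z ∨ IsType2 Z ∨ IsType3 Z

/-- The standing assumption : `E ⊆ ℝ³` is compact, contains the origin,
`0 < ε < 10⁻²⁵`, and `E` is `ε`-close to a minimal cone through `x` in every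
ball `B(x,r) ⊆ B(0,2)` centered on `E`. -/
def Standing (E : Set E3) (ε : ℝ) : Prop :=
  IsCompact E ∧ (0 : E3) ∈ E ∧ 0 < ε ∧ ε < (10 : ℝ) ^ (-25 : ℤ) ∧
    ∀ x ∈ E ∩ ball (0 : E3) 2, ∀ r : ℝ, 0 < r → ball x r ⊆ ball (0 : E3) 2 →
      ∃ Z, MinimalCone Z ∧ x ∈ Z ∧ relDist x r E Z ≤ ε

/-- `a(x,r)`. -/
noncomputable def aNum (E : Set E3) (x : E3) (r : ℝ) : ℝ :=
  sInf {t | ∃ P, IsType1 P ∧ x ∈ P ∧ t = relDist x r E P}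

/-- `b(x,r)`. -/
noncomputable def bNum (E : Set E3) (x : E3) (r : ℝ) : ℝ :=
  sInf {t | ∃ Y L, Type2Spine Y L ∧ x ∈ L ∧ t = relDist x r E Y}

/-- `c(x,r)`. -/
noncomputable def cNum (E : Set E3) (x : E3) (r : ℝ) : ℝ :=
  sInf {t | ∃ T, Type3Center T x ∧ t = relDist x r E T}

/-- `E₁` : the points of type 1. -/
def Eset1 (E : Set E3) (ε : ℝ) : Set E3 :=
  {x | x ∈ E ∩ ball (0 : E3) 2 ∧ ∃ r₀ > 0, ∀ r : ℝ, 0 < r → r < r₀ → aNum E x r ≤ 2 * ε}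

/-- `E₂` : the points of type 2. -/
def Eset2 (E : Set E3) (ε : ℝ) : Set E3 :=
  {x | x ∈ E ∩ ball (0 : E3) 2 ∧ ∃ r₀ > 0, ∀ r : ℝ, 0 < r → r < r₀ → bNum E x r ≤ 1500 * ε}

/-- `E₃` : the points of type 3. -/
def Eset3 (E : Set E3) (ε : ℝ) : Set E3 :=
  {x | x ∈ E ∩ ball (0 : E3) 2 ∧ ∃ r₀ > 0, ∀ r : ℝ, 0 < r → r < r₀ → cNum E x r ≤ 150 * ε}

open scoped RealInnerProductSpace

private lemma arith3 (a b c d R : ℝ) (hR : 0 < R) (h : a^2 + b^2/3 + c^2 = R^2)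
    (h1 : |c - d| < (39/100)*R) (h2 : |c + d| < (39/100)*R)
    (h3 : |a - d| < (39/100)*R) (h4 : |(-a + b)/2 - d| < (39/100)*R)
    (h5 : |(-a - b)/2 - d| < (39/100)*R) : False := by
  rw [abs_lt] at h1 h2 h3 h4 h5
  nlinarith [sq_nonneg (3*a - b), sq_nonneg (3*a + b), sq_nonneg c, mul_pos hR hR,
    sq_nonneg (c - d), sq_nonneg (c + d)]

set_option maxHeartbeats 1000000 in
/-- Lemma 3.1 (2.8): a set of type 2 whose spine contains `x` is at normalized
Hausdorff distance more than `1/3` from every plane, at every scale. -/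
theorem stmt3 (Y L P : Set E3) (x : E3)
    (hY : Type2Spine Y L) (hx : x ∈ L) (hP : IsType1 P) :
    ∀ r : ℝ, 0 < r → 1 / 3 < relDist x r Y P := by
  intro r hr
  obtain ⟨R, ⟨f, v, hdet, hRdef⟩, hYeq, hLeq⟩ := hY
  obtain ⟨Q, hQ2, rfl⟩ := hP
  rw [hLeq] at hx
  obtain ⟨x₀, ⟨h00, h01⟩, hxeq⟩ := hx
  have hs3 : Real.sqrt 3 ^ 2 = 3 := Real.sq_sqrt (by norm_num)
  -- the plane is nonempty
  have hQne : (Q : Set E3).Nonempty := by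
    rw [AffineSubspace.nonempty_iff_ne_bot]
    rintro rfl
    rw [AffineSubspace.direction_bot] at hQ2
    simp at hQ2
  obtain ⟨p, hp⟩ := hQne
  -- a unit normal vector to the plane
  have hdim : Module.finrank ℝ (Q.directionᗮ) = 1 := by
    have h3 := Submodule.finrank_add_finrank_orthogonal Q.direction
    rw [hQ2, finrank_euclideanSpace_fin] at h3
    omega
  have hne : Q.directionᗮ ≠ ⊥ := by
    intro hb; rw [hb, finrank_bot] at hdim; omega
  obtain ⟨n, hnmem, hn0⟩ := Submodule.exists_mem_ne_zero_of_ne_bot hne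
  set n₀ : E3 := (‖n‖⁻¹ : ℝ) • n with hn₀def
  have hn₀norm : ‖n₀‖ = 1 := norm_smul_inv_norm hn0
  have hn₀mem : n₀ ∈ Q.directionᗮ := Submodule.smul_mem _ _ hnmem
  set m : E3 := f.symm n₀ with hmdef
  have hmnorm : ‖m‖ = 1 := by rw [hmdef, f.symm.norm_map]; exact hn₀norm
  have hmsum : m 0 ^ 2 + m 1 ^ 2 + m 2 ^ 2 = 1 := by
    have h1 := EuclideanSpace.norm_eq m
    rw [hmnorm] at h1
    have h2 : (1:ℝ) = ∑ i, ‖m i‖ ^ 2 := by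
      nlinarith [Real.sq_sqrt (by positivity : (0:ℝ) ≤ ∑ i, ‖m i‖ ^ 2)]
    simpa [Fin.sum_univ_three, Real.norm_eq_abs, sq_abs] using h2.symm
  set ρ : ℝ := (9/10) * r with hρdef
  have hρpos : 0 < ρ := by positivity
  have hxv : x = f x₀ + v := by rw [← hxeq, hRdef]
  set d' : ℝ := ⟪n₀, p⟫ - ⟪n₀, x⟫ with hd'def
  set S1 : ℝ := sSup ((fun z => Metric.infDist z (Q : Set E3)) '' (Y ∩ ball x r)) with hS1
  have hbdd : BddAbove ((fun z => Metric.infDist z (Q : Set E3)) '' (Y ∩ ball x r)) := by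
    refine ⟨Metric.infDist x (Q : Set E3) + r, ?_⟩
    rintro t ⟨z, ⟨hz1, hz2⟩, rfl⟩
    have h1 : Metric.infDist z (Q : Set E3) ≤ Metric.infDist x (Q : Set E3) + dist z x :=
      Metric.infDist_le_infDist_add_dist
    have h2 := mem_ball.mp hz2
    simp only at h1 ⊢
    linarith
  have key : ∀ w : E3, ‖w‖ = 1 → x₀ + ρ • w ∈ YBase → |ρ * ⟪m, w⟫ - d'| ≤ S1 := by
    intro w hw hmemY
    set z : E3 := x + ρ • f w with hzdef
    have hzY : z ∈ Y := by
      rw [hYeq]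
      refine ⟨x₀ + ρ • w, hmemY, ?_⟩
      rw [hRdef, map_add, map_smul, hzdef, hxv]
      abel
    have hzball : z ∈ ball x r := by
      rw [mem_ball, dist_eq_norm, hzdef, add_sub_cancel_left, norm_smul, f.norm_map, hw,
        mul_one, Real.norm_eq_abs, abs_of_pos hρpos, hρdef]
      linarith
    have hinner : ⟪n₀, f w⟫ = ⟪m, w⟫ := by
      rw [hmdef, ← f.inner_map_map (f.symm n₀) w, f.apply_symm_apply]
    have hval : ⟪n₀, z⟫ - ⟪n₀, p⟫ = ρ * ⟪m, w⟫ - d' := by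
      rw [hzdef, inner_add_right, real_inner_smul_right, hinner, hd'def]
      ring
    have hlow : |ρ * ⟪m, w⟫ - d'| ≤ Metric.infDist z (Q : Set E3) := by
      have hNE : Nonempty (Q : Set E3) := ⟨⟨p, hp⟩⟩
      rw [Metric.infDist_eq_iInf]
      refine le_ciInf fun y => ?_
      have hyQ : (y : E3) ∈ Q := y.2
      have hdir : (y : E3) - p ∈ Q.direction := by
        simpa [vsub_eq_sub] using AffineSubspace.vsub_mem_direction hyQ hp
      have horth : ⟪n₀, (y : E3) - p⟫ = 0 := by
        have := (Submodule.mem_orthogonal _ _).mp hn₀mem ((y : E3) - p) hdir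
        rwa [real_inner_comm] at this
      have hyp : ⟪n₀, (y : E3)⟫ = ⟪n₀, p⟫ := by
        rw [inner_sub_right] at horth; linarith
      calc |ρ * ⟪m, w⟫ - d'| = |⟪n₀, z - (y : E3)⟫| := by
            rw [inner_sub_right, hyp, hval]
        _ ≤ ‖n₀‖ * ‖z - (y : E3)‖ := abs_real_inner_le_norm _ _
        _ = dist z (y : E3) := by rw [hn₀norm, one_mul, dist_eq_norm]
    exact le_trans hlow (le_csSup hbdd ⟨z, ⟨hzY, hzball⟩, rfl⟩)
  -- five witness directions
  set w1 : E3 := (WithLp.equiv 2 (Fin 3 → ℝ)).symm ![1, 0, 0] with hw1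
  set w2 : E3 := (WithLp.equiv 2 (Fin 3 → ℝ)).symm ![-(1/2), Real.sqrt 3/2, 0] with hw2
  set w3 : E3 := (WithLp.equiv 2 (Fin 3 → ℝ)).symm ![-(1/2), -(Real.sqrt 3/2), 0] with hw3
  set w4 : E3 := (WithLp.equiv 2 (Fin 3 → ℝ)).symm ![0, 0, 1] with hw4
  set w5 : E3 := (WithLp.equiv 2 (Fin 3 → ℝ)).symm ![0, 0, -1] with hw5
  have hw1n : ‖w1‖ = 1 := by
    rw [hw1, EuclideanSpace.norm_eq]
    simp [Fin.sum_univ_three, WithLp.equiv_symm_apply, PiLp.toLp_apply]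
  have hw2n : ‖w2‖ = 1 := by
    rw [hw2, EuclideanSpace.norm_eq]
    simp [Fin.sum_univ_three, WithLp.equiv_symm_apply, PiLp.toLp_apply]
    nlinarith [hs3]
  have hw3n : ‖w3‖ = 1 := by
    rw [hw3, EuclideanSpace.norm_eq]
    simp [Fin.sum_univ_three, WithLp.equiv_symm_apply, PiLp.toLp_apply]
    nlinarith [hs3]
  have hw4n : ‖w4‖ = 1 := by
    rw [hw4, EuclideanSpace.norm_eq]
    simp [Fin.sum_univ_three, WithLp.equiv_symm_apply, PiLp.toLp_apply]
  have hw5n : ‖w5‖ = 1 := by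
    rw [hw5, EuclideanSpace.norm_eq]
    simp [Fin.sum_univ_three, WithLp.equiv_symm_apply, PiLp.toLp_apply]
  have hc : ∀ w : E3, ∀ i : Fin 3, (x₀ + ρ • w) i = x₀ i + ρ * w i := by
    intro w i
    simp [PiLp.add_apply, PiLp.smul_apply, smul_eq_mul]
  have hw1m : x₀ + ρ • w1 ∈ YBase := by
    left
    rw [hc, hc, hw1]
    simp [WithLp.equiv_symm_apply, PiLp.toLp_apply, h00, h01]
    positivity
  have hw2m : x₀ + ρ • w2 ∈ YBase := by
    right; left
    rw [hc, hc, hw2]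
    simp [WithLp.equiv_symm_apply, PiLp.toLp_apply, h00, h01]
    constructor
    · linarith
    · ring
  have hw3m : x₀ + ρ • w3 ∈ YBase := by
    right; right
    rw [hc, hc, hw3]
    simp [WithLp.equiv_symm_apply, PiLp.toLp_apply, h00, h01]
    constructor
    · linarith
    · ring
  have hw4m : x₀ + ρ • w4 ∈ YBase := by
    left
    rw [hc, hc, hw4]
    simp [WithLp.equiv_symm_apply, PiLp.toLp_apply, h00, h01]
  have hw5m : x₀ + ρ • w5 ∈ YBase := by
    left
    rw [hc, hc, hw5]
    simp [WithLp.equiv_symm_apply, PiLp.toLp_apply, h00, h01]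
  have k1 := key w1 hw1n hw1m
  have k2 := key w2 hw2n hw2m
  have k3 := key w3 hw3n hw3m
  have k4 := key w4 hw4n hw4m
  have k5 := key w5 hw5n hw5m
  -- compute the inner products
  have e1 : ⟪m, w1⟫ = m 0 := by
    rw [hw1]
    simp [PiLp.inner_apply, RCLike.inner_apply, Fin.sum_univ_three, WithLp.equiv_symm_apply, PiLp.toLp_apply]
  have e2 : ⟪m, w2⟫ = (-(m 0) + Real.sqrt 3 * m 1) / 2 := by
    rw [hw2]
    simp [PiLp.inner_apply, RCLike.inner_apply, Fin.sum_univ_three, WithLp.equiv_symm_apply, PiLp.toLp_apply]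
    ring
  have e3 : ⟪m, w3⟫ = (-(m 0) - Real.sqrt 3 * m 1) / 2 := by
    rw [hw3]
    simp [PiLp.inner_apply, RCLike.inner_apply, Fin.sum_univ_three, WithLp.equiv_symm_apply, PiLp.toLp_apply]
    ring
  have e4 : ⟪m, w4⟫ = m 2 := by
    rw [hw4]
    simp [PiLp.inner_apply, RCLike.inner_apply, Fin.sum_univ_three, WithLp.equiv_symm_apply, PiLp.toLp_apply]
  have e5 : ⟪m, w5⟫ = -(m 2) := by
    rw [hw5]
    simp [PiLp.inner_apply, RCLike.inner_apply, Fin.sum_univ_three, WithLp.equiv_symm_apply, PiLp.toLp_apply]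
  rw [e1] at k1; rw [e2] at k2; rw [e3] at k3; rw [e4] at k4; rw [e5] at k5
  -- the main estimate
  have hfinal : (39/100) * ρ ≤ S1 := by
    by_contra hcon
    push_neg at hcon
    refine arith3 (ρ * m 0) (ρ * (Real.sqrt 3 * m 1)) (ρ * m 2) d' ρ hρpos
      (by linear_combination ρ^2 * hmsum + (ρ^2 * (m 1)^2 / 3) * hs3)
      (lt_of_le_of_lt k4 hcon)
      (by
        have h : |ρ * m 2 + d'| = |ρ * -(m 2) - d'| := by rw [← abs_neg]; ring_nf
        rw [h]; exact lt_of_le_of_lt k5 hcon)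
      (lt_of_le_of_lt k1 hcon)
      (by
        have h : (-(ρ * m 0) + ρ * (Real.sqrt 3 * m 1)) / 2 - d' =
            ρ * ((-(m 0) + Real.sqrt 3 * m 1) / 2) - d' := by ring
        rw [h]; exact lt_of_le_of_lt k2 hcon)
      (by
        have h : (-(ρ * m 0) - ρ * (Real.sqrt 3 * m 1)) / 2 - d' =
            ρ * ((-(m 0) - Real.sqrt 3 * m 1) / 2) - d' := by ring
        rw [h]; exact lt_of_le_of_lt k3 hcon)
  -- conclude
  have hmax : (39/100) * ρ ≤ max S1
      (sSup ((fun z => Metric.infDist z Y) '' ((Q : Set E3) ∩ ball x r))) :=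
    le_trans hfinal (le_max_left _ _)
  have hrinv : (0:ℝ) ≤ r⁻¹ := inv_nonneg.mpr hr.le
  have hcalc : r⁻¹ * ((39/100) * ρ) = 351/1000 := by
    rw [hρdef]; field_simp; ring
  calc (1:ℝ)/3 < 351/1000 := by norm_num
    _ = r⁻¹ * ((39/100) * ρ) := hcalc.symm
    _ ≤ r⁻¹ * max S1 (sSup ((fun z => Metric.infDist z Y) '' ((Q : Set E3) ∩ ball x r))) :=
        mul_le_mul_of_nonneg_left hmax hrinv
    _ = relDist x r Y (Q : Set E3) := by rw [relDist, hS1]
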